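/- The Yatracos class of the family of n-fold products of univariate Gaussians, consisting of all sets {xⁿ ∈ ℝⁿ : p_{m,σ}(xⁿ) > p_{m′,σ′}(xⁿ)} where p_{m,σ} is the n-fold Gaussian density with mean m and variance σ², is a VC class whose VC dimension is bounded by 12 log₂(12e), uniformly in n. -/
import Mathlib


/-- `n`-th shatter coefficient of a class `𝒞` of subsets of `Z`. -/
noncomputable def shatterCoef {Z : Type*} (𝒞 : Set (Set Z)) (n : ℕ) : ℕ :=
  ⨆ z : Fin n → Z, Set.ncard {f : Fin n → Bool | ∃ A ∈ 𝒞, ∀ i, f i = true ↔ z i ∈ A}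

/-- The `n`-fold product Gaussian density with mean `m` and variance `σ²`. -/
noncomputable def gaussDens (n : ℕ) (m σ : ℝ) (x : Fin n → ℝ) : ℝ :=
  (2 * Real.pi * σ ^ 2) ^ (-(n : ℝ) / 2) *
    Real.exp (-(∑ i, (x i - m) ^ 2) / (2 * σ ^ 2))

/-- The Yatracos class of the family of `n`-fold products of univariate Gaussians:
all sets `{xⁿ : p_{m,σ}(xⁿ) > p_{m′,σ′}(xⁿ)}`. -/
def gaussYatracos (n : ℕ) : Set (Set (Fin n → ℝ)) :=
  {A | ∃ m σ m' σ' : ℝ, 0 < σ ∧ 0 < σ' ∧ (m, σ) ≠ (m', σ') ∧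
    A = {x | gaussDens n m' σ' x < gaussDens n m σ x}}

/-- Expansion of the sum of squared deviations. -/
lemma sum_sq_expand (n : ℕ) (m : ℝ) (x : Fin n → ℝ) :
    ∑ i, (x i - m) ^ 2 = (∑ i, x i ^ 2) - 2 * m * (∑ i, x i) + n * m ^ 2 := by
  have : ∀ i : Fin n, (x i - m) ^ 2 = x i ^ 2 - 2 * m * x i + m ^ 2 := fun i => by ring
  simp only [this, Finset.sum_add_distrib, Finset.sum_sub_distrib, ← Finset.mul_sum,
    Finset.sum_const, Finset.card_fin, nsmul_eq_mul]

/-- Every Yatracos set is the positivity set of an affine function of `(∑ xᵢ², ∑ xᵢ)`. -/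
lemma yatracos_affine {n : ℕ} {A : Set (Fin n → ℝ)} (hA : A ∈ gaussYatracos n) :
    ∃ a b c : ℝ, ∀ x, x ∈ A ↔ 0 < a * (∑ i, x i ^ 2) + b * (∑ i, x i) + c := by
  obtain ⟨m, σ, m', σ', hσ, hσ', -, rfl⟩ := hA
  refine ⟨1 / (2 * σ' ^ 2) - 1 / (2 * σ ^ 2), m / σ ^ 2 - m' / σ' ^ 2,
    -(n : ℝ) / 2 * Real.log (2 * Real.pi * σ ^ 2)
      + (n : ℝ) / 2 * Real.log (2 * Real.pi * σ' ^ 2)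
      - n * m ^ 2 / (2 * σ ^ 2) + n * m' ^ 2 / (2 * σ' ^ 2), fun x => ?_⟩
  have hp : 0 < gaussDens n m σ x := by unfold gaussDens; positivity
  have hp' : 0 < gaussDens n m' σ' x := by unfold gaussDens; positivity
  have hlog : gaussDens n m' σ' x < gaussDens n m σ x ↔
      Real.log (gaussDens n m' σ' x) < Real.log (gaussDens n m σ x) :=
    (Real.log_lt_log_iff hp' hp).symm
  have hL : ∀ (mm σσ : ℝ), 0 < σσ → Real.log (gaussDens n mm σσ x) =
      -(n : ℝ) / 2 * Real.log (2 * Real.pi * σσ ^ 2)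
        + (-(∑ i, (x i - mm) ^ 2) / (2 * σσ ^ 2)) := by
    intro mm σσ hσσ
    have hKσ : (0:ℝ) < 2 * Real.pi * σσ ^ 2 := by positivity
    unfold gaussDens
    rw [Real.log_mul (by positivity) (Real.exp_ne_zero _), Real.log_exp,
      Real.log_rpow hKσ]
  rw [Set.mem_setOf_eq, hlog, hL m σ hσ, hL m' σ' hσ']
  rw [sum_sq_expand n m x, sum_sq_expand n m' x]
  have hσ2 : σ ^ 2 ≠ 0 := by positivity
  have hσ'2 : σ' ^ 2 ≠ 0 := by positivity
  set Q := ∑ i, x i ^ 2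
  set S := ∑ i, x i
  set L := Real.log (2 * Real.pi * σ ^ 2)
  set L' := Real.log (2 * Real.pi * σ' ^ 2)
  have key : (-(n : ℝ) / 2 * L + (-(Q - 2 * m * S + n * m ^ 2) / (2 * σ ^ 2)))
      - (-(n : ℝ) / 2 * L' + (-(Q - 2 * m' * S + n * m' ^ 2) / (2 * σ' ^ 2)))
      = (1 / (2 * σ' ^ 2) - 1 / (2 * σ ^ 2)) * Q + (m / σ ^ 2 - m' / σ' ^ 2) * S
        + (-(n : ℝ) / 2 * L + (n : ℝ) / 2 * L' - n * m ^ 2 / (2 * σ ^ 2)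
          + n * m' ^ 2 / (2 * σ' ^ 2)) := by
    field_simp
    ring
  constructor <;> intro h <;> linarith

/-- If the `j`-th shatter coefficient is maximal, some `j` points are shattered. -/
lemma exists_shattered {Z : Type*} {𝒞 : Set (Set Z)} [Nonempty Z] {j : ℕ}
    (h : shatterCoef 𝒞 j = 2 ^ j) :
    ∃ z : Fin j → Z, ∀ f : Fin j → Bool, ∃ A ∈ 𝒞, ∀ i, f i = true ↔ z i ∈ A := by
  classical
  set F : (Fin j → Z) → ℕ :=
    fun z => Set.ncard {f : Fin j → Bool | ∃ A ∈ 𝒞, ∀ i, f i = true ↔ z i ∈ A} with hF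
  have hbdd : ∀ z, F z ≤ 2 ^ j := by
    intro z
    have h1 : {f : Fin j → Bool | ∃ A ∈ 𝒞, ∀ i, f i = true ↔ z i ∈ A}.ncard
        ≤ (Set.univ : Set (Fin j → Bool)).ncard :=
      Set.ncard_le_ncard (Set.subset_univ _) Set.finite_univ
    simpa [Set.ncard_univ] using h1
  have hmem : sSup (Set.range F) ∈ Set.range F := by
    apply Nat.sSup_mem (Set.range_nonempty F)
    exact ⟨2 ^ j, by rintro x ⟨z, rfl⟩; exact hbdd z⟩
  obtain ⟨z, hz⟩ := hmem
  have hsup : shatterCoef 𝒞 j = sSup (Set.range F) := rfl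
  rw [hsup] at h
  have hz2 : F z = 2 ^ j := hz.trans h
  refine ⟨z, fun f => ?_⟩
  have huniv : {f : Fin j → Bool | ∃ A ∈ 𝒞, ∀ i, f i = true ↔ z i ∈ A} = Set.univ := by
    apply Set.eq_of_subset_of_ncard_le (Set.subset_univ _)
    rw [Set.ncard_univ]
    simp only [Nat.card_eq_fintype_card, Fintype.card_fun, Fintype.card_bool,
      Fintype.card_fin]
    exact ge_of_eq hz2
  rw [Set.eq_univ_iff_forall] at huniv
  exact huniv f

/-- Dudley's argument: positivity sets of a 3-dimensional affine family of functions
cannot shatter `j ≥ 4` points. -/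
lemma no_shatter_four {Z : Type*} {𝒞 : Set (Set Z)} (φ ψ : Z → ℝ)
    (hrep : ∀ A ∈ 𝒞, ∃ a b c : ℝ, ∀ x, x ∈ A ↔ 0 < a * φ x + b * ψ x + c)
    {j : ℕ} (hj : 4 ≤ j) (z : Fin j → Z)
    (hsh : ∀ f : Fin j → Bool, ∃ A ∈ 𝒞, ∀ i, f i = true ↔ z i ∈ A) : False := by
  classical
  set v : Fin j → (Fin 3 → ℝ) := fun i => ![φ (z i), ψ (z i), 1] with hv
  have hnli : ¬ LinearIndependent ℝ v := by
    intro hli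
    have := hli.fintype_card_le_finrank
    simp [Module.finrank_fintype_fun_eq_card] at this
    omega
  obtain ⟨γ, hsum, i₀, hi₀⟩ := Fintype.not_linearIndependent_iff.mp hnli
  obtain ⟨γ', hsum', i₁, hi₁⟩ : ∃ γ' : Fin j → ℝ, (∑ i, γ' i • v i = 0) ∧ ∃ i, 0 < γ' i := by
    rcases lt_or_gt_of_ne hi₀ with hneg | hpos
    · refine ⟨-γ, ?_, i₀, by simpa using hneg⟩
      simp [neg_smul, Finset.sum_neg_distrib, hsum]
    · exact ⟨γ, hsum, i₀, hpos⟩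
  obtain ⟨A, hA, hAi⟩ := hsh (fun i => decide (0 < γ' i))
  obtain ⟨a, b, c, habc⟩ := hrep A hA
  have hcoord : ∀ k : Fin 3, ∑ i, γ' i * v i k = 0 := by
    intro k
    have := congrFun hsum' k
    simpa [Finset.sum_apply] using this
  have hzero : ∑ i, γ' i * (a * φ (z i) + b * ψ (z i) + c) = 0 := by
    have expand : ∀ i, γ' i * (a * φ (z i) + b * ψ (z i) + c)
        = a * (γ' i * v i 0) + b * (γ' i * v i 1) + c * (γ' i * v i 2) := by
      intro i; simp [hv]; ring
    rw [Finset.sum_congr rfl (fun i _ => expand i)]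
    simp only [Finset.sum_add_distrib, ← Finset.mul_sum, hcoord 0, hcoord 1, hcoord 2]
    ring
  have hterm : ∀ i, 0 ≤ γ' i * (a * φ (z i) + b * ψ (z i) + c) := by
    intro i
    rcases lt_trichotomy (γ' i) 0 with h | h | h
    · have hnmem : ¬ (z i ∈ A) := by
        intro hmem
        have := (hAi i).mpr hmem
        simp at this; linarith
      have hle : a * φ (z i) + b * ψ (z i) + c ≤ 0 := by
        by_contra hc
        exact hnmem ((habc (z i)).mpr (lt_of_not_ge hc))
      nlinarith
    · simp [h]
    · have hmem : z i ∈ A := (hAi i).mp (by simp [h])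
      have hpos := (habc (z i)).mp hmem
      positivity
  have hpos : 0 < ∑ i, γ' i * (a * φ (z i) + b * ψ (z i) + c) := by
    apply Finset.sum_pos' (fun i _ => hterm i)
    refine ⟨i₁, Finset.mem_univ _, ?_⟩
    have hmem : z i₁ ∈ A := (hAi i₁).mp (by simp [hi₁])
    have := (habc (z i₁)).mp hmem
    positivity
  linarith [hzero]

/-- The Yatracos class of `n`-fold Gaussian products is a VC class with VC dimension at
most `12 log₂(12e)`, uniformly in `n`: any `j` that is shattered (`S_j = 2^j`) satisfies
`j ≤ 12 log₂(12e)`. -/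
theorem gauss_yatracos_vc_bound (n : ℕ) :
    ∀ j : ℕ, shatterCoef (gaussYatracos n) j = 2 ^ j →
      (j : ℝ) ≤ 12 * Real.logb 2 (12 * Real.exp 1) := by
  intro j hj
  have hj3 : j ≤ 3 := by
    by_contra hc
    push_neg at hc
    obtain ⟨z, hz⟩ := exists_shattered hj
    exact no_shatter_four (fun x => ∑ i, x i ^ 2) (fun x => ∑ i, x i)
      (fun A hA => yatracos_affine hA) (by omega) z hz
  have h1 : (1 : ℝ) ≤ Real.logb 2 (12 * Real.exp 1) := by
    rw [Real.le_logb_iff_rpow_le one_lt_two (by positivity), Real.rpow_one]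
    nlinarith [Real.exp_pos 1, Real.one_le_exp (zero_le_one : (0:ℝ) ≤ 1)]
  have : (j : ℝ) ≤ 3 := by exact_mod_cast Nat.cast_le.mpr hj3
  linarith
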